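/- Every weakly polymatroidal monomial ideal has linear quotients. -/

import Mathlib

open MvPolynomial

/-- `d` is (the exponent vector of) a minimal monomial generator of `I`. -/
def IsMinGen {K : Type} [Field K] {σ : Type} (I : Ideal (MvPolynomial σ K))
    (d : σ →₀ ℕ) : Prop :=
  (monomial d (1 : K)) ∈ I ∧
    ∀ d' : σ →₀ ℕ, d' ≤ d → (monomial d' (1 : K)) ∈ I → d' = d

/-- `I` is weakly polymatroidal with respect to the variable order in which
`x` is a larger variable than `y` iff `ord x < ord y`. -/
def WeaklyPolymatroidal {K : Type} [Field K] {σ : Type} (ord : σ → ℕ)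
    (I : Ideal (MvPolynomial σ K)) : Prop :=
  ∀ d e : σ →₀ ℕ, IsMinGen I d → IsMinGen I e →
    ∀ q : σ, (∀ x : σ, ord x < ord q → d x = e x) → d q < e q →
      ∃ p : σ, ord q < ord p ∧ 0 < d p ∧
        IsMinGen I (d + Finsupp.single q 1 - Finsupp.single p 1)

/-- `I` has linear quotients: its (finitely many) minimal monomial generators
can be ordered `u₀, …, u_{t-1}` so that each colon ideal
`(u₀,…,u_{i-1}) : uᵢ` is generated by variables. -/
def HasLinearQuotients {K : Type} [Field K] {σ : Type}
    (I : Ideal (MvPolynomial σ K)) : Prop :=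
  ∃ (t : ℕ) (u : Fin t → (σ →₀ ℕ)), Function.Injective u ∧
    (∀ i, IsMinGen I (u i)) ∧ (∀ d, IsMinGen I d → ∃ i, u i = d) ∧
    ∀ i : Fin t, ∃ S : Set σ,
      (Ideal.span {p | ∃ j : Fin t, j < i ∧ p = monomial (u j) (1 : K)}).colon
          (Ideal.span {monomial (u i) (1 : K)}) =
        Ideal.span ((fun s : σ => (X s : MvPolynomial σ K)) '' S)

section aux
variable {K : Type} [Field K] {N : ℕ} {I : Ideal (MvPolynomial (Fin N) K)}
  {G : Set (Fin N →₀ ℕ)}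

lemma mem_iff_aux (hmono : I = Ideal.span ((fun d => monomial d (1 : K)) '' G))
    (d : Fin N →₀ ℕ) :
    (monomial d (1 : K)) ∈ I ↔ ∃ g ∈ G, g ≤ d := by
  rw [hmono, mem_ideal_span_monomial_image]
  simp [support_monomial]

lemma isMinGen_iff_aux (hmono : I = Ideal.span ((fun d => monomial d (1 : K)) '' G))
    (d : Fin N →₀ ℕ) :
    IsMinGen I d ↔ d ∈ G ∧ ∀ g ∈ G, g ≤ d → g = d := by
  constructor
  · rintro ⟨h1, h2⟩
    rw [mem_iff_aux hmono] at h1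
    obtain ⟨g, hg, hgd⟩ := h1
    have hmin : ∀ g' ∈ G, g' ≤ d → g' = d := fun g' hg' hle =>
      h2 g' hle ((mem_iff_aux hmono g').mpr ⟨g', hg', le_rfl⟩)
    exact ⟨(hmin g hg hgd) ▸ hg, hmin⟩
  · rintro ⟨hd, hmin⟩
    refine ⟨(mem_iff_aux hmono d).mpr ⟨d, hd, le_rfl⟩, fun d' hle hd' => ?_⟩
    obtain ⟨g, hg, hgd'⟩ := (mem_iff_aux hmono d').mp hd'
    exact le_antisymm hle ((hmin g hg (hgd'.trans hle)) ▸ hgd')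

lemma minGen_finite : {d : Fin N →₀ ℕ | IsMinGen I d}.Finite := by
  have hanti : IsAntichain (· ≤ ·) {d : Fin N →₀ ℕ | IsMinGen I d} := by
    rintro a ⟨ha1, ha2⟩ b ⟨hb1, hb2⟩ hne hle
    exact hne (hb2 a hle ha1)
  exact hanti.finite_of_partiallyWellOrderedOn
    ((Set.isPWO_of_wellQuasiOrderedLE {d : Fin N →₀ ℕ | IsMinGen I d}))

end aux

/-- every weakly polymatroidal monomial ideal has linear
quotients.  Variables `X_1 > X_2 > ⋯ > X_N` are indexed by `Fin N`. -/
theorem stmt2 (K : Type) [Field K] (N : ℕ) (I : Ideal (MvPolynomial (Fin N) K))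
    (G : Set (Fin N →₀ ℕ))
    (hmono : I = Ideal.span ((fun d => monomial d (1 : K)) '' G))
    (hwp : WeaklyPolymatroidal (fun s : Fin N => (s : ℕ)) I) :
    HasLinearQuotients I := by
  classical
  have hfin : {d : Fin N →₀ ℕ | IsMinGen I d}.Finite := minGen_finite
  let F : Finset ((Lex (Fin N →₀ ℕ))ᵒᵈ) := hfin.toFinset
  let e := F.orderIsoOfFin rfl
  let u : Fin F.card → (Fin N →₀ ℕ) :=
    fun i => ofLex (OrderDual.ofDual ((e i : (Lex (Fin N →₀ ℕ))ᵒᵈ)))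
  have hmem : ∀ i, IsMinGen I (u i) := fun i => hfin.mem_toFinset.mp (e i).2
  have hlt : ∀ i j : Fin F.card, i < j → toLex (u j) < toLex (u i) := fun i j hij =>
    e.strictMono hij
  have hsurj : ∀ d, IsMinGen I d → ∃ i, u i = d := fun d hd => by
    have hdF : (toLex d : (Lex (Fin N →₀ ℕ))ᵒᵈ) ∈ F := hfin.mem_toFinset.mpr hd
    refine ⟨e.symm ⟨_, hdF⟩, ?_⟩
    show ofLex (OrderDual.ofDual ((e (e.symm ⟨_, hdF⟩) : (Lex (Fin N →₀ ℕ))ᵒᵈ))) = d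
    rw [e.apply_symm_apply]; rfl
  have hinj : Function.Injective u := fun i j hij => by
    rcases lt_trichotomy i j with h | h | h
    · exact absurd (hlt i j h) (by simp [hij])
    · exact h
    · exact absurd (hlt j i h) (by simp [hij])
  -- also: lex-bigger comes earlier
  have hlt' : ∀ i k : Fin F.card, toLex (u i) < toLex (u k) → k < i := by
    intro i k h
    rcases lt_trichotomy k i with h' | h' | h'
    · exact h'
    · exact absurd h (by simp [h'])
    · exact absurd (hlt i k h') (by simp [le_of_lt h])
  refine ⟨F.card, u, hinj, hmem, hsurj, fun i => ?_⟩
  -- the colon ideal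
  set J : Ideal (MvPolynomial (Fin N) K) :=
    Ideal.span {p | ∃ j : Fin F.card, j < i ∧ p = monomial (u j) (1 : K)} with hJ
  set C : Ideal (MvPolynomial (Fin N) K) :=
    J.colon (Ideal.span {monomial (u i) (1 : K)}) with hC
  -- rewrite the generating set of J as a monomial image
  have hJset : {p : MvPolynomial (Fin N) K | ∃ j : Fin F.card, j < i ∧ p = monomial (u j) (1 : K)}
      = (fun d => monomial d (1 : K)) '' {d | ∃ j : Fin F.card, j < i ∧ u j = d} := by
    ext p
    constructor
    · rintro ⟨j, hj, rfl⟩; exact ⟨u j, ⟨j, hj, rfl⟩, rfl⟩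
    · rintro ⟨d, ⟨j, hj, rfl⟩, rfl⟩; exact ⟨j, hj, rfl⟩
  -- membership of a monomial in J
  have hmemJ : ∀ m : Fin N →₀ ℕ, (monomial m (1 : K)) ∈ J ↔ ∃ j : Fin F.card, j < i ∧ u j ≤ m := by
    intro m
    rw [hJ, hJset, mem_ideal_span_monomial_image]
    simp only [support_monomial, one_ne_zero, if_false, Finset.mem_singleton]
    constructor
    · intro h
      obtain ⟨g, ⟨j, hj, rfl⟩, hle⟩ := h m rfl
      exact ⟨j, hj, hle⟩
    · rintro ⟨j, hj, hle⟩ m' rfl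
      exact ⟨u j, ⟨j, hj, rfl⟩, hle⟩
  -- membership in the colon ideal
  have hmemC : ∀ f : MvPolynomial (Fin N) K, f ∈ C ↔ f * monomial (u i) (1 : K) ∈ J := by
    intro f
    rw [hC, Ideal.mem_colon_span_singleton]
  refine ⟨{q : Fin N | (X q : MvPolynomial (Fin N) K) ∈ C}, ?_⟩
  apply le_antisymm
  · -- hard direction : C ⊆ span of the variables in it
    intro f hf
    have hsup : ∀ m ∈ f.support, ∃ j : Fin F.card, j < i ∧ u j ≤ m + u i := by
      intro m hm
      have h1 : f * monomial (u i) (1 : K) ∈ J := (hmemC f).mp hf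
      rw [hJ, hJset, mem_ideal_span_monomial_image] at h1
      have hms : m + u i ∈ (f * monomial (u i) (1 : K)).support := by
        rw [mem_support_iff, coeff_mul_monomial]
        simpa using (mem_support_iff.mp hm)
      obtain ⟨g, ⟨j, hj, rfl⟩, hle⟩ := h1 _ hms
      exact ⟨j, hj, hle⟩
    -- key step : produce a variable for each monomial of f
    have hkey : ∀ m ∈ f.support, ∃ q : Fin N, 0 < m q ∧ (X q : MvPolynomial (Fin N) K) ∈ C := by
      intro m hm
      obtain ⟨j, hj, hle⟩ := hsup m hm
      -- u j ≠ u i and toLex (u i) < toLex (u j)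
      have hltji : toLex (u i) < toLex (u j) := hlt j i hj
      obtain ⟨q, hagree, hq⟩ := Finsupp.Lex.lt_iff.mp hltji
      -- m q > 0
      have hq' : u i q < u j q := hq
      have hmq : 0 < m q := by
        have hle' : u j q ≤ m q + u i q := by simpa using hle q
        omega
      -- apply weak polymatroidality
      obtain ⟨p, hqp, hip, hw⟩ := hwp (u i) (u j) (hmem i) (hmem j) q
        (fun x hx => hagree x hx) hq
      set w : Fin N →₀ ℕ := u i + Finsupp.single q 1 - Finsupp.single p 1 with hwdef
      have hpq : p ≠ q := fun h => by simp [h] at hqp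
      -- toLex (u i) < toLex w
      have hltw : toLex (u i) < toLex w := by
        rw [Finsupp.Lex.lt_iff]
        refine ⟨q, fun x hx => ?_, ?_⟩
        · have hxq : x ≠ q := ne_of_lt hx
          have hqp' : q < p := hqp
          have hxp : x ≠ p := by
            intro h
            rw [h] at hx
            exact absurd (hx.trans hqp') (lt_irrefl p)
          show u i x = w x
          rw [hwdef]
          simp [Finsupp.tsub_apply, Finsupp.add_apply, Finsupp.single_apply,
            hxq.symm, hxp.symm]
        · show u i q < w q
          rw [hwdef]
          simp [Finsupp.tsub_apply, Finsupp.add_apply, Finsupp.single_apply, hpq]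
      obtain ⟨k, hk⟩ := hsurj w hw
      have hki : k < i := hlt' i k (hk ▸ hltw)
      refine ⟨q, hmq, ?_⟩
      rw [hmemC]
      have : (X q : MvPolynomial (Fin N) K) * monomial (u i) (1 : K)
          = monomial (Finsupp.single q 1 + u i) (1 : K) := by
        rw [X, monomial_mul, one_mul]
      rw [this, hmemJ]
      refine ⟨k, hki, ?_⟩
      rw [hk]
      calc w ≤ u i + Finsupp.single q 1 := tsub_le_self
        _ = Finsupp.single q 1 + u i := add_comm _ _
    -- conclude membership in the span of variables
    have himg : (fun s : Fin N => (X s : MvPolynomial (Fin N) K)) ''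
        {q : Fin N | (X q : MvPolynomial (Fin N) K) ∈ C}
        = (fun d => monomial d (1 : K)) ''
          ((fun q : Fin N => Finsupp.single q 1) '' {q : Fin N | (X q : MvPolynomial (Fin N) K) ∈ C}) := by
      rw [Set.image_image]
      apply Set.image_congr
      intro q _
      rw [X]
    rw [himg, mem_ideal_span_monomial_image]
    intro m hm
    obtain ⟨q, hq, hqC⟩ := hkey m hm
    exact ⟨Finsupp.single q 1, ⟨q, hqC, rfl⟩, Finsupp.single_le_iff.mpr hq⟩
  · -- easy direction
    rw [Ideal.span_le]
    rintro p ⟨q, hq, rfl⟩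
    exact hq
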